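/- arXiv:2302.02155 — 2 statements merged into one kernel-verified Lean document; each statement's English description precedes it below -/
import Mathlib

section
/- Best low-rank approximation in blocks: if C = bdiag(A₁,…,Aₙ) is block diagonal and each Aᵢ_k is the best Frobenius rank-k approximation of Aᵢ, then bdiag(A₁_k,…,Aₙ_k) has rank at most n·k and satisfies ‖C − bdiag(A₁_k,…,Aₙ_k)‖_F² = Σᵢ ‖Aᵢ − Aᵢ_k‖_F² ≤ ‖C − C_k'‖_F² for any block diagonal C' whose blocks each have rank ≤ k. -/
open Matrix

/-- The Frobenius norm of a real matrix. -/
noncomputable def frobNorm {α β : Type*} [Fintype α] [Fintype β]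
    (A : Matrix α β ℝ) : ℝ :=
  Real.sqrt (∑ i, ∑ j, (A i j) ^ 2)

lemma frobNorm_nonneg {α β : Type*} [Fintype α] [Fintype β] (A : Matrix α β ℝ) :
    0 ≤ frobNorm A := Real.sqrt_nonneg _

lemma frobNorm_sq {α β : Type*} [Fintype α] [Fintype β] (A : Matrix α β ℝ) :
    frobNorm A ^ 2 = ∑ i, ∑ j, (A i j) ^ 2 := by
  have h : 0 ≤ ∑ i, ∑ j, (A i j) ^ 2 :=
    Finset.sum_nonneg fun i _ => Finset.sum_nonneg fun j _ => sq_nonneg _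
  simp [frobNorm, Real.sq_sqrt h]

lemma matrix_rank_add_le {m n : Type*} [Fintype m] [Fintype n] [DecidableEq n]
    (A B : Matrix m n ℝ) : (A + B).rank ≤ A.rank + B.rank := by
  rw [Matrix.rank, Matrix.rank, Matrix.rank, Matrix.mulVecLin_add]
  have hle : LinearMap.range (A.mulVecLin + B.mulVecLin) ≤
      LinearMap.range A.mulVecLin ⊔ LinearMap.range B.mulVecLin := by
    rintro x ⟨v, rfl⟩
    exact Submodule.add_mem_sup ⟨v, rfl⟩ ⟨v, rfl⟩
  exact le_trans (Submodule.finrank_mono hle)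
    (Submodule.finrank_add_le_finrank_add_finrank _ _)

lemma matrix_rank_sum_le {m n ι : Type*} [Fintype m] [Fintype n] [DecidableEq n]
    (s : Finset ι) (f : ι → Matrix m n ℝ) :
    (∑ i ∈ s, f i).rank ≤ ∑ i ∈ s, (f i).rank := by
  classical
  induction s using Finset.induction with
  | empty => simp [Matrix.rank_zero]
  | insert _ _ h ih =>
    rw [Finset.sum_insert h, Finset.sum_insert h]
    exact le_trans (matrix_rank_add_le _ _) (add_le_add_right ih _)

lemma rank_single_block {N p q : ℕ} (m : Fin N) (B : Matrix (Fin p) (Fin q) ℝ) :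
    (Matrix.blockDiagonal (Pi.single m B)).rank ≤ B.rank := by
  set U : Matrix (Fin p × Fin N) (Fin p) ℝ :=
    Matrix.of (fun x j => if x.2 = m ∧ x.1 = j then 1 else 0)
  set V : Matrix (Fin q) (Fin q × Fin N) ℝ :=
    Matrix.of (fun j y => if y.2 = m ∧ y.1 = j then 1 else 0)
  have hfac : Matrix.blockDiagonal (Pi.single m B) = U * B * V := by
    ext ⟨i, a⟩ ⟨j, b⟩
    simp only [Matrix.blockDiagonal_apply, Matrix.mul_apply, U, V, Matrix.of_apply]
    by_cases ha : a = m <;> by_cases hb : b = m <;>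
      simp [ha, hb, Pi.single_apply, ite_and, mul_ite, ite_mul, Finset.sum_ite_eq]
    subst ha; exact fun h => absurd h.symm hb
  rw [hfac]
  exact le_trans (Matrix.rank_mul_le_left _ _) (Matrix.rank_mul_le_right _ _)

lemma rank_blockDiagonal_le {N p q : ℕ} (Ak : Fin N → Matrix (Fin p) (Fin q) ℝ) :
    (Matrix.blockDiagonal Ak).rank ≤ ∑ m, (Ak m).rank := by
  have hbd : Matrix.blockDiagonal Ak =
      ∑ m, Matrix.blockDiagonal (Pi.single m (Ak m)) := by
    have := (map_sum (Matrix.blockDiagonalAddMonoidHom (Fin p) (Fin q) (Fin N) ℝ)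
      (fun m => Pi.single m (Ak m)) Finset.univ)
    simpa [Finset.univ_sum_single] using this
  rw [hbd]
  exact le_trans (matrix_rank_sum_le _ _)
    (Finset.sum_le_sum fun m _ => rank_single_block m (Ak m))

lemma frobNorm_blockDiagonal_sq {N p q : ℕ} (M : Fin N → Matrix (Fin p) (Fin q) ℝ) :
    frobNorm (Matrix.blockDiagonal M) ^ 2 = ∑ m, frobNorm (M m) ^ 2 := by
  simp only [frobNorm_sq]
  rw [← Finset.univ_product_univ, Finset.sum_product]
  rw [Finset.sum_comm]
  refine Finset.sum_congr rfl fun m _ => ?_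
  refine Finset.sum_congr rfl fun i _ => ?_
  rw [← Finset.univ_product_univ, Finset.sum_product]
  rw [Finset.sum_comm]
  simp [Matrix.blockDiagonal_apply, Finset.sum_ite_eq, eq_comm]

/-- Best low-rank approximation in blocks: if each `Ak i` is a best Frobenius
rank-`k` approximation of `A i`, then `bdiag (Ak)` has rank at most `N·k`, the
squared block-diagonal error is the sum of the blockwise squared errors, and
`bdiag (Ak)` beats any block diagonal matrix whose blocks have rank `≤ k`. -/
theorem blockDiagonal_best_lowrank_approx {N p q k : ℕ}
    (A Ak : Fin N → Matrix (Fin p) (Fin q) ℝ)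
    (hrank : ∀ i, (Ak i).rank ≤ k)
    (hbest : ∀ i, ∀ B : Matrix (Fin p) (Fin q) ℝ, B.rank ≤ k →
      frobNorm (A i - Ak i) ≤ frobNorm (A i - B)) :
    (Matrix.blockDiagonal Ak).rank ≤ N * k ∧
      frobNorm (Matrix.blockDiagonal A - Matrix.blockDiagonal Ak) ^ 2 =
        ∑ i, frobNorm (A i - Ak i) ^ 2 ∧
      ∀ C' : Fin N → Matrix (Fin p) (Fin q) ℝ, (∀ i, (C' i).rank ≤ k) →
        frobNorm (Matrix.blockDiagonal A - Matrix.blockDiagonal Ak) ≤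
          frobNorm (Matrix.blockDiagonal A - Matrix.blockDiagonal C') := by
  have key : ∀ M : Fin N → Matrix (Fin p) (Fin q) ℝ,
      frobNorm (Matrix.blockDiagonal A - Matrix.blockDiagonal M) ^ 2 =
        ∑ i, frobNorm (A i - M i) ^ 2 := by
    intro M
    rw [← Matrix.blockDiagonal_sub, frobNorm_blockDiagonal_sq]
    simp
  refine ⟨?_, key Ak, ?_⟩
  · calc (Matrix.blockDiagonal Ak).rank ≤ ∑ m, (Ak m).rank := rank_blockDiagonal_le Ak
      _ ≤ ∑ _m : Fin N, k := Finset.sum_le_sum fun m _ => hrank m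
      _ = N * k := by simp [Finset.sum_const, mul_comm]
  · intro C' hC'
    have hsq : frobNorm (Matrix.blockDiagonal A - Matrix.blockDiagonal Ak) ^ 2 ≤
        frobNorm (Matrix.blockDiagonal A - Matrix.blockDiagonal C') ^ 2 := by
      rw [key Ak, key C']
      refine Finset.sum_le_sum fun i _ => ?_
      exact pow_le_pow_left₀ (frobNorm_nonneg _) (hbest i (C' i) (hC' i)) 2
    exact (pow_le_pow_iff_left₀ (frobNorm_nonneg _) (frobNorm_nonneg _) two_ne_zero).mp hsq
end

section
/- Subgradient of the nuclear norm: if A ∈ ℝ^{m×n} has reduced SVD A = UΣVᵀ with Σ invertible (positive singular values), then for any matrix W of the form UVᵀ + Z with UᵀZ = 0, ZV = 0, and spectral norm ‖Z‖ ≤ 1, and for any B ∈ ℝ^{m×n}, ‖B‖_* ≥ ‖A‖_* + ⟨W, B − A⟩. -/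
open Matrix

/-- The nuclear norm of a real matrix. -/
noncomputable def nuclearNorm {m n : ℕ} (A : Matrix (Fin m) (Fin n) ℝ) : ℝ :=
  ∑ i, Real.sqrt ((show (Aᵀ * A).IsHermitian by
    simpa using Matrix.isHermitian_conjTranspose_mul_self A).eigenvalues i)

/-- The spectral (ℓ2 operator) norm of a real matrix. -/
noncomputable def specNorm {m n : ℕ} (A : Matrix (Fin m) (Fin n) ℝ) : ℝ :=
  ⨆ x : {x : EuclideanSpace ℝ (Fin n) // ‖x‖ ≤ 1},
    ‖(WithLp.equiv 2 (Fin m → ℝ)).symm (A.mulVec ((WithLp.equiv 2 (Fin n → ℝ)) x.1))‖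

namespace NNAux

/-- Euclidean norm of a plain vector. -/
noncomputable def en {k : ℕ} (v : Fin k → ℝ) : ℝ := Real.sqrt (v ⬝ᵥ v)

lemma dot_self_nonneg {k : ℕ} (v : Fin k → ℝ) : 0 ≤ v ⬝ᵥ v :=
  Finset.sum_nonneg fun i _ => mul_self_nonneg (v i)

lemma en_nonneg {k : ℕ} (v : Fin k → ℝ) : 0 ≤ en v := Real.sqrt_nonneg _

lemma sq_en {k : ℕ} (v : Fin k → ℝ) : en v ^ 2 = v ⬝ᵥ v :=
  Real.sq_sqrt (dot_self_nonneg v)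

lemma en_eq_norm {k : ℕ} (v : Fin k → ℝ) :
    ‖(WithLp.equiv 2 (Fin k → ℝ)).symm v‖ = en v := by
  rw [EuclideanSpace.norm_eq, en]
  congr 1
  simp [dotProduct, sq]

lemma norm_eq_en {k : ℕ} (x : EuclideanSpace ℝ (Fin k)) :
    ‖x‖ = en ((WithLp.equiv 2 (Fin k → ℝ)) x) := by
  rw [← en_eq_norm]; rfl

lemma dot_mulVec_mulVec {a b c : ℕ} (M : Matrix (Fin a) (Fin b) ℝ)
    (N : Matrix (Fin a) (Fin c) ℝ) (x : Fin b → ℝ) (y : Fin c → ℝ) :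
    (M *ᵥ x) ⬝ᵥ (N *ᵥ y) = x ⬝ᵥ ((Mᵀ * N) *ᵥ y) := by
  rw [dotProduct_mulVec (M *ᵥ x) N y, ← Matrix.mulVec_transpose, mulVec_mulVec,
    dotProduct_mulVec x, ← Matrix.mulVec_transpose, transpose_mul, transpose_transpose]

lemma en_smul {k : ℕ} (c : ℝ) (hc : 0 ≤ c) (v : Fin k → ℝ) : en (c • v) = c * en v := by
  rw [en, en, smul_dotProduct, dotProduct_smul, smul_eq_mul, smul_eq_mul, ← mul_assoc,
    ← sq, Real.sqrt_mul (sq_nonneg c), Real.sqrt_sq hc]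

lemma en_zero {k : ℕ} : en (0 : Fin k → ℝ) = 0 := by simp [en, dotProduct]

/-- `L1`: the spectral norm bounds `mulVec`. -/
lemma en_mulVec_le {m n : ℕ} (Z : Matrix (Fin m) (Fin n) ℝ) (y : Fin n → ℝ) :
    en (Z *ᵥ y) ≤ specNorm Z * en y := by
  set f := LinearMap.toContinuousLinearMap (Matrix.toEuclideanLin Z) with hf
  have hfapp : ∀ x : EuclideanSpace ℝ (Fin n),
      f x = (WithLp.equiv 2 (Fin m → ℝ)).symm (Z *ᵥ (WithLp.equiv 2 (Fin n → ℝ)) x) := by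
    intro x; rfl
  have hbdd : BddAbove (Set.range fun x : {x : EuclideanSpace ℝ (Fin n) // ‖x‖ ≤ 1} =>
      ‖(WithLp.equiv 2 (Fin m → ℝ)).symm (Z *ᵥ (WithLp.equiv 2 (Fin n → ℝ)) x.1)‖) := by
    refine ⟨‖f‖, ?_⟩
    rintro v ⟨x, rfl⟩
    dsimp only
    rw [← hfapp]
    exact (f.le_opNorm x.1).trans (mul_le_of_le_one_right (norm_nonneg f) x.2)
  have hle : ∀ x : EuclideanSpace ℝ (Fin n), ‖x‖ ≤ 1 →
      en (Z *ᵥ (WithLp.equiv 2 (Fin n → ℝ)) x) ≤ specNorm Z := by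
    intro x hx
    rw [← en_eq_norm]
    exact le_ciSup hbdd ⟨x, hx⟩
  have h0 : (0:ℝ) ≤ specNorm Z := by
    have h := hle 0 (by simp)
    exact le_trans (en_nonneg _) h
  by_cases hy : y = 0
  · subst hy
    simp only [mulVec_zero, en_zero, mul_zero, le_refl]
  · have hpos : 0 < en y := by
      rcases lt_or_eq_of_le (en_nonneg y) with h | h
      · exact h
      · exfalso; apply hy
        have h2 : y ⬝ᵥ y = 0 := by
          have h3 := sq_en y
          rw [← h3, ← h]; ring
        exact dotProduct_self_eq_zero.mp h2
    set x : EuclideanSpace ℝ (Fin n) := (WithLp.equiv 2 (Fin n → ℝ)).symm ((en y)⁻¹ • y) with hx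
    have hxe : (WithLp.equiv 2 (Fin n → ℝ)) x = (en y)⁻¹ • y := rfl
    have hxnorm : ‖x‖ ≤ 1 := by
      rw [norm_eq_en, hxe, en_smul _ (by positivity)]
      rw [inv_mul_cancel₀ (ne_of_gt hpos)]
    have h4 := hle x hxnorm
    rw [hxe, mulVec_smul, en_smul _ (by positivity)] at h4
    calc en (Z *ᵥ y) = (en y) * ((en y)⁻¹ * en (Z *ᵥ y)) := by field_simp
    _ ≤ en y * specNorm Z := mul_le_mul_of_nonneg_left h4 (le_of_lt hpos)
    _ = specNorm Z * en y := by ring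

/-- Cauchy–Schwarz for dot products. -/
lemma dot_le {k : ℕ} (u v : Fin k → ℝ) : u ⬝ᵥ v ≤ en u * en v := by
  have h := Finset.sum_mul_sq_le_sq_mul_sq Finset.univ u v
  have h2 : (u ⬝ᵥ v) ^ 2 ≤ (u ⬝ᵥ u) * (v ⬝ᵥ v) := by
    simpa [dotProduct, sq] using h
  calc u ⬝ᵥ v ≤ |u ⬝ᵥ v| := le_abs_self _
  _ = Real.sqrt ((u ⬝ᵥ v) ^ 2) := (Real.sqrt_sq_eq_abs _).symm
  _ ≤ Real.sqrt ((u ⬝ᵥ u) * (v ⬝ᵥ v)) := Real.sqrt_le_sqrt h2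
  _ = en u * en v := by rw [Real.sqrt_mul (dot_self_nonneg u), en, en]

/-- Diagonal entries of `Qᵀ X Q` as quadratic forms in the columns of `Q`. -/
lemma entry_qq {k l : ℕ} (X : Matrix (Fin l) (Fin l) ℝ) (Q : Matrix (Fin l) (Fin k) ℝ)
    (i : Fin k) :
    (Qᵀ * X * Q) i i = (fun a => Q a i) ⬝ᵥ (X *ᵥ fun a => Q a i) := by
  simp only [Matrix.mul_apply, transpose_apply, mulVec, dotProduct, Finset.sum_mul,
    Finset.mul_sum]
  rw [Finset.sum_comm]
  exact Finset.sum_congr rfl fun a _ => Finset.sum_congr rfl fun b _ => by ring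

end NNAux

open NNAux in
/-- Subgradient of the nuclear norm: if `A = U Σ Vᵀ` is a reduced SVD with
positive singular values, then every `W = U Vᵀ + Z` with `UᵀZ = 0`, `Z V = 0`
and `‖Z‖ ≤ 1` is a subgradient of `‖·‖_*` at `A`:
`‖B‖_* ≥ ‖A‖_* + ⟨W, B − A⟩` for all `B`. -/
theorem nuclearNorm_subgradient {m n r : ℕ}
    (A : Matrix (Fin m) (Fin n) ℝ)
    (U : Matrix (Fin m) (Fin r) ℝ) (V : Matrix (Fin n) (Fin r) ℝ)
    (S : Matrix (Fin r) (Fin r) ℝ)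
    (hU : Uᵀ * U = 1) (hV : Vᵀ * V = 1)
    (hSdiag : ∀ i j : Fin r, i ≠ j → S i j = 0)
    (hSpos : ∀ i : Fin r, 0 < S i i)
    (hA : A = U * S * Vᵀ)
    (Z W : Matrix (Fin m) (Fin n) ℝ)
    (hZU : Uᵀ * Z = 0) (hZV : Z * V = 0) (hZnorm : specNorm Z ≤ 1)
    (hW : W = U * Vᵀ + Z) :
    ∀ B : Matrix (Fin m) (Fin n) ℝ,
      nuclearNorm B ≥ nuclearNorm A + (Wᵀ * (B - A)).trace := by
  intro B
  classical
  have hZtU : Zᵀ * U = 0 := by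
    have h := congrArg Matrix.transpose hZU
    simpa using h
  -- `Wᵀ W = V Vᵀ + Zᵀ Z`
  have hWW : Wᵀ * W = V * Vᵀ + Zᵀ * Z := by
    rw [hW]
    simp only [transpose_add, transpose_mul, transpose_transpose, Matrix.add_mul, Matrix.mul_add]
    have h1 : V * Uᵀ * (U * Vᵀ) = V * Vᵀ := by
      rw [Matrix.mul_assoc, ← Matrix.mul_assoc Uᵀ U Vᵀ, hU, Matrix.one_mul]
    have h2 : V * Uᵀ * Z = 0 := by rw [Matrix.mul_assoc, hZU, Matrix.mul_zero]
    have h3 : Zᵀ * (U * Vᵀ) = 0 := by rw [← Matrix.mul_assoc, hZtU, Matrix.zero_mul]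
    rw [h1, h2, h3, add_zero, zero_add]
  have hVVt : (V * Vᵀ) * (V * Vᵀ) = V * Vᵀ := by
    rw [Matrix.mul_assoc, ← Matrix.mul_assoc Vᵀ V Vᵀ, hV, Matrix.one_mul]
  -- `W` maps the unit ball into the unit ball
  have hWx : ∀ x : Fin n → ℝ, x ⬝ᵥ x ≤ 1 → en (W *ᵥ x) ≤ 1 := by
    intro x hx
    have e1 : (W *ᵥ x) ⬝ᵥ (W *ᵥ x) = x ⬝ᵥ ((V * Vᵀ) *ᵥ x) + (Z *ᵥ x) ⬝ᵥ (Z *ᵥ x) := by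
      rw [dot_mulVec_mulVec, hWW, add_mulVec, dotProduct_add, ← dot_mulVec_mulVec]
    set y := x - (V * Vᵀ) *ᵥ x with hy
    have e2 : Z *ᵥ y = Z *ᵥ x := by
      rw [hy, mulVec_sub, mulVec_mulVec, ← Matrix.mul_assoc, hZV, Matrix.zero_mul, zero_mulVec, sub_zero]
    have e3 : (Z *ᵥ x) ⬝ᵥ (Z *ᵥ x) ≤ y ⬝ᵥ y := by
      have hb : en (Z *ᵥ y) ≤ en y := by
        refine le_trans (en_mulVec_le Z y) ?_
        calc specNorm Z * en y ≤ 1 * en y :=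
          mul_le_mul_of_nonneg_right hZnorm (en_nonneg y)
        _ = en y := one_mul _
      calc (Z *ᵥ x) ⬝ᵥ (Z *ᵥ x) = en (Z *ᵥ y) ^ 2 := by rw [e2, sq_en]
      _ ≤ en y ^ 2 := pow_le_pow_left₀ (en_nonneg _) hb 2
      _ = y ⬝ᵥ y := sq_en y
    have e4 : y ⬝ᵥ y = x ⬝ᵥ x - x ⬝ᵥ ((V * Vᵀ) *ᵥ x) := by
      have hPt : (V * Vᵀ)ᵀ = V * Vᵀ := by rw [transpose_mul, transpose_transpose]
      have c1 : ((V * Vᵀ) *ᵥ x) ⬝ᵥ ((V * Vᵀ) *ᵥ x) = x ⬝ᵥ ((V * Vᵀ) *ᵥ x) := by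
        rw [dot_mulVec_mulVec, hPt, hVVt]
      have c2 : ((V * Vᵀ) *ᵥ x) ⬝ᵥ x = x ⬝ᵥ ((V * Vᵀ) *ᵥ x) := dotProduct_comm _ _
      rw [hy, sub_dotProduct, dotProduct_sub, dotProduct_sub, c1, c2]; ring
    have e5 : (W *ᵥ x) ⬝ᵥ (W *ᵥ x) ≤ 1 := by
      rw [e1]; rw [e4] at e3; linarith
    calc en (W *ᵥ x) = Real.sqrt ((W *ᵥ x) ⬝ᵥ (W *ᵥ x)) := rfl
    _ ≤ Real.sqrt 1 := Real.sqrt_le_sqrt e5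
    _ = 1 := Real.sqrt_one
  -- Key 2 : `trace (Wᵀ B) ≤ ‖B‖₊`
  have key2 : ∀ C : Matrix (Fin m) (Fin n) ℝ, (Wᵀ * C).trace ≤ nuclearNorm C := by
    intro C
    set h : (Cᵀ * C).IsHermitian := by
      simpa using Matrix.isHermitian_conjTranspose_mul_self C with hh
    set Q : Matrix (Fin n) (Fin n) ℝ :=
      (Matrix.IsHermitian.eigenvectorUnitary h : Matrix (Fin n) (Fin n) ℝ) with hQdef
    have hsQ : star Q = Qᵀ := by
      rw [Matrix.star_eq_conjTranspose, Matrix.conjTranspose_eq_transpose_of_trivial]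
    have hmem := (Matrix.IsHermitian.eigenvectorUnitary h).2
    rw [Matrix.mem_unitaryGroup_iff'] at hmem
    have hQ1 : Qᵀ * Q = 1 := by rw [← hsQ]; exact hmem
    have hQ2 : Q * Qᵀ = 1 := by
      rw [← hsQ]
      exact Matrix.mem_unitaryGroup_iff.mp (Matrix.IsHermitian.eigenvectorUnitary h).2
    have hCt : Cᴴ = Cᵀ := Matrix.conjTranspose_eq_transpose_of_trivial C
    have hdiag : Qᵀ * (Cᵀ * C) * Q = Matrix.diagonal h.eigenvalues := by
      have hst : star Q * (Cᵀ * C) * Q = Matrix.diagonal (RCLike.ofReal ∘ h.eigenvalues) :=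
        h.conjStarAlgAut_star_eigenvectorUnitary
      rw [hsQ] at hst
      rw [hst]
      rw [show (RCLike.ofReal ∘ h.eigenvalues : Fin n → ℝ) = h.eigenvalues by
        funext i; simp [RCLike.ofReal_real_eq_id]]
    have t1 : (Wᵀ * C).trace = (Qᵀ * (Wᵀ * C) * Q).trace := by
      rw [Matrix.trace_mul_cycle, hQ2, one_mul]
    have hband : ∀ i : Fin n, (Qᵀ * (Wᵀ * C) * Q) i i ≤ Real.sqrt (h.eigenvalues i) := by
      intro i
      set q : Fin n → ℝ := fun a => Q a i with hq
      have hqq : q ⬝ᵥ q = 1 := by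
        have he : (Qᵀ * Q) i i = q ⬝ᵥ q := by
          simp [Matrix.mul_apply, dotProduct, hq]
        rw [← he, hQ1]
        simp [Matrix.one_apply]
      have hentry : (Qᵀ * (Wᵀ * C) * Q) i i = (W *ᵥ q) ⬝ᵥ (C *ᵥ q) := by
        rw [entry_qq, ← dot_mulVec_mulVec]
      have hBq : (C *ᵥ q) ⬝ᵥ (C *ᵥ q) = h.eigenvalues i := by
        rw [dot_mulVec_mulVec, ← entry_qq, hdiag, Matrix.diagonal_apply_eq]
      have h2 : en (C *ᵥ q) = Real.sqrt (h.eigenvalues i) := by rw [en, hBq]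
      calc (Qᵀ * (Wᵀ * C) * Q) i i = (W *ᵥ q) ⬝ᵥ (C *ᵥ q) := hentry
      _ ≤ en (W *ᵥ q) * en (C *ᵥ q) := dot_le _ _
      _ ≤ 1 * en (C *ᵥ q) :=
        mul_le_mul_of_nonneg_right (hWx q (le_of_eq hqq)) (en_nonneg _)
      _ = Real.sqrt (h.eigenvalues i) := by rw [one_mul, h2]
    calc (Wᵀ * C).trace = ∑ i, (Qᵀ * (Wᵀ * C) * Q) i i := by
          rw [t1]; rfl
    _ ≤ ∑ i, Real.sqrt (h.eigenvalues i) := Finset.sum_le_sum fun i _ => hband i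
    _ = nuclearNorm C := rfl
  -- Key 1 : `trace (Wᵀ A) = ‖A‖₊`
  have hd : S = Matrix.diagonal (fun i => S i i) := by
    ext i j
    by_cases hij : i = j
    · subst hij; simp
    · rw [Matrix.diagonal_apply_ne _ hij]; exact hSdiag i j hij
  have hSt : Sᵀ = S := by
    conv_lhs => rw [hd]
    rw [Matrix.diagonal_transpose, ← hd]
  have hWA : Wᵀ * A = V * S * Vᵀ := by
    rw [hW, hA, transpose_add, transpose_mul, transpose_transpose, Matrix.add_mul]
    have p0 : Uᵀ * (U * S * Vᵀ) = S * Vᵀ := by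
      rw [← Matrix.mul_assoc, ← Matrix.mul_assoc, hU, Matrix.one_mul]
    have p1 : V * Uᵀ * (U * S * Vᵀ) = V * S * Vᵀ := by
      rw [Matrix.mul_assoc V Uᵀ _, p0, ← Matrix.mul_assoc]
    have p2 : Zᵀ * (U * S * Vᵀ) = 0 := by
      rw [← Matrix.mul_assoc, ← Matrix.mul_assoc, hZtU, Matrix.zero_mul, Matrix.zero_mul]
    rw [p1, p2, add_zero]
  have hMps : (Aᴴ * A).PosSemidef := Matrix.posSemidef_conjTranspose_mul_self A
  have hNps : (V * S * Vᵀ).PosSemidef := by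
    set R : Matrix (Fin r) (Fin r) ℝ := Matrix.diagonal (fun i => Real.sqrt (S i i)) with hR
    have hRR : R * R = S := by
      rw [hR, Matrix.diagonal_mul_diagonal]
      conv_rhs => rw [hd]
      exact congrArg Matrix.diagonal (funext fun i => Real.mul_self_sqrt (le_of_lt (hSpos i)))
    have hRt : Rᵀ = R := Matrix.diagonal_transpose _
    have hps := Matrix.posSemidef_conjTranspose_mul_self (R * Vᵀ)
    have e : (R * Vᵀ)ᴴ * (R * Vᵀ) = V * S * Vᵀ := by
      rw [Matrix.conjTranspose_eq_transpose_of_trivial, transpose_mul, transpose_transpose, hRt,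
        Matrix.mul_assoc, ← Matrix.mul_assoc R R Vᵀ, hRR, ← Matrix.mul_assoc]
    rwa [e] at hps
  have hsq : (V * S * Vᵀ) ^ 2 = Aᴴ * A := by
    rw [pow_two, Matrix.conjTranspose_eq_transpose_of_trivial, hA]
    have cV : ∀ {k : ℕ} (X : Matrix (Fin r) (Fin k) ℝ), Vᵀ * (V * X) = X := by
      intro k X; rw [← Matrix.mul_assoc, hV, Matrix.one_mul]
    have cU : ∀ {k : ℕ} (X : Matrix (Fin r) (Fin k) ℝ), Uᵀ * (U * X) = X := by
      intro k X; rw [← Matrix.mul_assoc, hU, Matrix.one_mul]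
    simp only [transpose_mul, transpose_transpose, Matrix.mul_assoc]
    rw [cV, cU, hSt]
  have hsqrt : V * S * Vᵀ = hMps.1.cfc Real.sqrt := by
    open scoped MatrixOrder in
    rw [← hMps.1.cfc_eq, ← cfcₙ_eq_cfc (f := Real.sqrt) (a := Aᴴ * A) (hf0 := Real.sqrt_zero),
      ← CFC.sqrt_eq_real_sqrt _ hMps.nonneg, eq_comm,
      CFC.sqrt_eq_iff _ _ hMps.nonneg hNps.nonneg, ← pow_two, hsq]
  have key1 : (Wᵀ * A).trace = nuclearNorm A := by
    rw [hWA, hsqrt, Matrix.IsHermitian.cfc, Unitary.conjStarAlgAut_apply, Matrix.trace_mul_cycle]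
    have hu : star (Matrix.IsHermitian.eigenvectorUnitary hMps.1 : Matrix (Fin n) (Fin n) ℝ) *
        (Matrix.IsHermitian.eigenvectorUnitary hMps.1 : Matrix (Fin n) (Fin n) ℝ) = 1 :=
      Matrix.mem_unitaryGroup_iff'.mp (Matrix.IsHermitian.eigenvectorUnitary hMps.1).2
    rw [hu, one_mul, Matrix.trace_diagonal]
    rw [nuclearNorm]
    refine Finset.sum_congr rfl fun i _ => ?_
    simp [RCLike.ofReal_real_eq_id]
  have tsub : (Wᵀ * (B - A)).trace = (Wᵀ * B).trace - (Wᵀ * A).trace := by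
    rw [Matrix.mul_sub, Matrix.trace_sub]
  have := key2 B
  rw [ge_iff_le, tsub, key1]
  linarith
end
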